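/- Let n ≥ 1, N ≥ 1, and let F = (f_{ij}) be a real symmetric positive definite N×N matrix with f_{ij} ≤ 0 for i ≠ j. If f belongs to the cone 𝓔_G, then E f ≥ 0 (first Griffiths inequality for Gaussian ferromagnetic spins). -/

import Mathlib

open MeasureTheory RealInnerProductSpace Real

open Nat

/-- The cone `𝓔_G` of finite linear combinations with nonnegative coefficients of
monomials `∏_{1 ≤ i ≤ j ≤ N} (x_i · x_j)^{n_{ij}}`, for variables `x_1,…,x_N ∈ ℝ^n`. -/
def InConeG (n N : ℕ) (f : (Fin N → EuclideanSpace ℝ (Fin n)) → ℝ) : Prop :=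
  ∃ (K : ℕ) (c : Fin K → ℝ) (e : Fin K → Fin N → Fin N → ℕ),
    (∀ k, 0 ≤ c k) ∧
    ∀ x, f x = ∑ k, c k *
      ∏ p ∈ Finset.univ.filter (fun p : Fin N × Fin N => p.1 ≤ p.2),
        (⟪x p.1, x p.2⟫ : ℝ) ^ e k p.1 p.2

/-- The (unnormalized) ferromagnetic Gaussian density `exp(-∑_{i,j} f_{ij} x_i·x_j / 2)`. -/
noncomputable def gaussDensity (n N : ℕ) (F : Matrix (Fin N) (Fin N) ℝ)
    (x : Fin N → EuclideanSpace ℝ (Fin n)) : ℝ :=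
  Real.exp (-(∑ i, ∑ j, F i j * (⟪x i, x j⟫ : ℝ)) / 2)

namespace GriffithsAux


/-! ### 1D Gaussian moment lemmas -/

lemma pow_le_factorial_mul_exp (m : ℕ) {x : ℝ} (hx : 0 ≤ x) :
    x ^ m ≤ (m ! : ℝ) * Real.exp x := by
  have h := Real.sum_le_exp_of_nonneg hx (m + 1)
  have h2 : x ^ m / (m ! : ℝ) ≤ Real.exp x := by
    refine le_trans ?_ h
    exact Finset.single_le_sum (f := fun i => x ^ i / (i ! : ℝ))
      (fun i _ => by positivity) (Finset.self_mem_range_succ m)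
  have hm : (0:ℝ) < (m ! : ℝ) := by positivity
  calc x ^ m = (x ^ m / (m ! : ℝ)) * (m ! : ℝ) := by field_simp
  _ ≤ Real.exp x * (m ! : ℝ) := by gcongr
  _ = (m ! : ℝ) * Real.exp x := mul_comm _ _

lemma oneD_integrable {b : ℝ} (hb : 0 < b) (m : ℕ) :
    Integrable (fun t : ℝ => t ^ m * Real.exp (-(b * t ^ 2) / 2)) := by
  have hb2 : 0 < b / 4 := by linarith
  refine Integrable.mono' ((integrable_exp_neg_mul_sq hb2).const_mul
      ((m ! : ℝ) * Real.exp (1 / b))) ?_ ?_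
  · apply Measurable.aestronglyMeasurable; fun_prop
  · refine Filter.Eventually.of_forall fun t => ?_
    have habs : ‖t ^ m * Real.exp (-(b * t ^ 2) / 2)‖
        = |t| ^ m * Real.exp (-(b * t ^ 2) / 2) := by
      rw [norm_mul, norm_pow, Real.norm_eq_abs, Real.norm_eq_abs,
        abs_of_nonneg (Real.exp_pos _).le]
    rw [habs]
    have h1 : |t| ^ m ≤ (m ! : ℝ) * Real.exp |t| := pow_le_factorial_mul_exp m (abs_nonneg t)
    have h2 : |t| ≤ b / 4 * t ^ 2 + 1 / b := by
      have key : 4 * b * (b / 4 * t ^ 2 + 1 / b - |t|) = (b * |t| - 2) ^ 2 := by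
        field_simp; rw [← sq_abs t]; ring
      nlinarith [key, sq_nonneg (b * |t| - 2), hb]
    calc |t| ^ m * Real.exp (-(b * t ^ 2) / 2)
        ≤ ((m ! : ℝ) * Real.exp (b / 4 * t ^ 2 + 1 / b)) * Real.exp (-(b * t ^ 2) / 2) := by
          have : (0:ℝ) ≤ Real.exp (-(b * t ^ 2) / 2) := (Real.exp_pos _).le
          exact mul_le_mul_of_nonneg_right (h1.trans (by gcongr)) this
      _ = (m ! : ℝ) * Real.exp (1 / b) * Real.exp (-(b / 4) * t ^ 2) := by
          rw [mul_assoc, ← Real.exp_add, mul_assoc, ← Real.exp_add]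
          ring_nf

lemma oneD_nonneg {b : ℝ} (hb : 0 < b) (m : ℕ) :
    0 ≤ ∫ t : ℝ, t ^ m * Real.exp (-(b * t ^ 2) / 2) := by
  rcases Nat.even_or_odd m with hm | hm
  · refine integral_nonneg fun t => ?_
    exact mul_nonneg (hm.pow_nonneg t) (Real.exp_pos _).le
  · have key : ∫ t : ℝ, t ^ m * Real.exp (-(b * t ^ 2) / 2)
        = - ∫ t : ℝ, t ^ m * Real.exp (-(b * t ^ 2) / 2) := by
      conv_lhs => rw [← (Measure.measurePreserving_neg (volume : Measure ℝ)).integral_comp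
        (Homeomorph.neg ℝ).measurableEmbedding
        (fun t : ℝ => t ^ m * Real.exp (-(b * t ^ 2) / 2))]
      rw [← integral_neg]
      congr 1; funext t
      show (-t) ^ m * Real.exp (-(b * (-t) ^ 2) / 2) = -(t ^ m * Real.exp (-(b * t ^ 2) / 2))
      rw [hm.neg_pow, neg_sq]
      ring
    linarith [key]

variable {n N : ℕ}

/-! ### One Euclidean factor -/

lemma euclid_key {b : ℝ} (hb : 0 < b) (m : Fin n → ℕ) :
    Integrable (fun v : EuclideanSpace ℝ (Fin n) =>
      (∏ α, (v α) ^ (m α)) * Real.exp (-(b * ∑ α, (v α) ^ 2) / 2)) ∧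
    Integrable (fun v : EuclideanSpace ℝ (Fin n) =>
      (∏ α, |v α| ^ (m α)) * Real.exp (-(b * ∑ α, (v α) ^ 2) / 2)) ∧
    0 ≤ ∫ v : EuclideanSpace ℝ (Fin n),
      (∏ α, (v α) ^ (m α)) * Real.exp (-(b * ∑ α, (v α) ^ 2) / 2) := by
  have mp := (EuclideanSpace.volume_preserving_symm_measurableEquiv_toLp (Fin n)).symm
  have emb := (MeasurableEquiv.toLp 2 (Fin n → ℝ)).measurableEmbedding
  have key : ∀ h : EuclideanSpace ℝ (Fin n) → ℝ,
      Integrable (fun y : Fin n → ℝ => h ((MeasurableEquiv.toLp 2 (Fin n → ℝ)) y)) ↔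
      Integrable h := fun h => mp.integrable_comp_emb emb
  have keyI : ∀ h : EuclideanSpace ℝ (Fin n) → ℝ,
      ∫ y : Fin n → ℝ, h ((MeasurableEquiv.toLp 2 (Fin n → ℝ)) y) = ∫ v, h v :=
    fun h => mp.integral_comp' h
  have eq1 : (fun y : Fin n → ℝ =>
      ((∏ α, (((MeasurableEquiv.toLp 2 (Fin n → ℝ)) y) α) ^ (m α)) *
        Real.exp (-(b * ∑ α, (((MeasurableEquiv.toLp 2 (Fin n → ℝ)) y) α) ^ 2) / 2)))
      = fun y : Fin n → ℝ => ∏ α, (y α ^ (m α) * Real.exp (-(b * (y α) ^ 2) / 2)) := by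
    funext y
    have hc : ∀ α, ((MeasurableEquiv.toLp 2 (Fin n → ℝ)) y) α = y α := fun _ => rfl
    simp_rw [hc]
    rw [Finset.prod_mul_distrib, ← Real.exp_sum]
    congr 2
    rw [Finset.mul_sum, ← Finset.sum_neg_distrib, Finset.sum_div]
  refine ⟨?_, ?_, ?_⟩
  · rw [← key, eq1]
    exact Integrable.fintype_prod (f := fun α (t : ℝ) => t ^ m α * Real.exp (-(b * t ^ 2) / 2))
      fun α => oneD_integrable hb (m α)
  · rw [← key]
    have eq2 : (fun y : Fin n → ℝ =>
        ((∏ α, |((MeasurableEquiv.toLp 2 (Fin n → ℝ)) y) α| ^ (m α)) *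
          Real.exp (-(b * ∑ α, (((MeasurableEquiv.toLp 2 (Fin n → ℝ)) y) α) ^ 2) / 2)))
        = fun y : Fin n → ℝ => ∏ α, (|y α| ^ (m α) * Real.exp (-(b * (y α) ^ 2) / 2)) := by
      funext y
      have hc : ∀ α, ((MeasurableEquiv.toLp 2 (Fin n → ℝ)) y) α = y α := fun _ => rfl
      simp_rw [hc]
      rw [Finset.prod_mul_distrib, ← Real.exp_sum]
      congr 2
      rw [Finset.mul_sum, ← Finset.sum_neg_distrib, Finset.sum_div]
    rw [eq2]
    refine Integrable.fintype_prod (f := fun α (t : ℝ) => |t| ^ m α * Real.exp (-(b * t ^ 2) / 2))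
      fun α => ?_
    have h := (oneD_integrable hb (m α)).abs
    refine h.congr (Filter.Eventually.of_forall fun t => ?_)
    simp [abs_mul, abs_pow, abs_of_nonneg (Real.exp_pos _).le]
  · rw [← keyI, eq1, MeasureTheory.volume_pi, MeasureTheory.integral_fintype_prod_eq_prod
      (f := fun α (t : ℝ) => t ^ m α * Real.exp (-(b * t ^ 2) / 2))]
    exact Finset.prod_nonneg fun α _ => oneD_nonneg hb (m α)

/-! ### The cone of nonnegative combinations of coordinate monomials -/

def mono (m : Fin N → Fin n → ℕ) (x : Fin N → EuclideanSpace ℝ (Fin n)) : ℝ :=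
  ∏ i, ∏ α, (x i α) ^ (m i α)

inductive InCone (n N : ℕ) : ((Fin N → EuclideanSpace ℝ (Fin n)) → ℝ) → Prop
  | gen (r : ℝ) (m : Fin N → Fin n → ℕ) (hr : 0 ≤ r) : InCone n N (fun x => r * mono m x)
  | add {g h} : InCone n N g → InCone n N h → InCone n N (fun x => g x + h x)

noncomputable def absx (x : Fin N → EuclideanSpace ℝ (Fin n)) :
    Fin N → EuclideanSpace ℝ (Fin n) :=
  fun i => (WithLp.equiv 2 (Fin n → ℝ)).symm (fun α => |x i α|)

lemma InCone.congr {g h : (Fin N → EuclideanSpace ℝ (Fin n)) → ℝ} (hg : InCone n N g)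
    (he : ∀ x, g x = h x) : InCone n N h := by
  have : g = h := funext he
  rwa [this] at hg

lemma InCone.mul {g h : (Fin N → EuclideanSpace ℝ (Fin n)) → ℝ} (hg : InCone n N g)
    (hh : InCone n N h) : InCone n N (fun x => g x * h x) := by
  induction hg with
  | gen r m hr =>
    induction hh with
    | gen r' m' hr' =>
      refine (InCone.gen (r * r') (m + m') (mul_nonneg hr hr')).congr fun x => ?_
      simp only [mono, Pi.add_apply, pow_add, Finset.prod_mul_distrib]
      ring
    | add hg1 hg2 ih1 ih2 =>
      exact (ih1.add ih2).congr fun x => by ring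
  | add hg1 hg2 ih1 ih2 =>
    exact (ih1.add ih2).congr fun x => by ring

lemma InCone.smul {g : (Fin N → EuclideanSpace ℝ (Fin n)) → ℝ} {r : ℝ} (hr : 0 ≤ r)
    (hg : InCone n N g) : InCone n N (fun x => r * g x) := by
  have h1 : InCone n N (fun x => r * mono 0 x) := InCone.gen r 0 hr
  have h2 : InCone n N (fun _ => r) := h1.congr fun x => by simp [mono]
  exact (h2.mul hg)

lemma InCone.one : InCone n N (fun _ => (1:ℝ)) :=
  (InCone.gen 1 0 zero_le_one).congr fun x => by simp [mono]

lemma InCone.pow {g : (Fin N → EuclideanSpace ℝ (Fin n)) → ℝ} (hg : InCone n N g) (m : ℕ) :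
    InCone n N (fun x => g x ^ m) := by
  induction m with
  | zero => exact InCone.one.congr fun x => by simp
  | succ k ih => exact (ih.mul hg).congr fun x => by rw [← pow_succ]

lemma InCone.sum {ι : Type*} (s : Finset ι) (g : ι → (Fin N → EuclideanSpace ℝ (Fin n)) → ℝ)
    (hg : ∀ i ∈ s, InCone n N (g i)) : InCone n N (fun x => ∑ i ∈ s, g i x) := by
  classical
  induction s using Finset.induction_on with
  | empty => exact (InCone.gen 0 0 le_rfl).congr fun x => by simp
  | insert a s hx ih =>
    have h1 := hg a (Finset.mem_insert_self a s)
    have h2 := ih fun i hi => hg i (Finset.mem_insert_of_mem hi)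
    exact (h1.add h2).congr fun x => by rw [Finset.sum_insert hx]

lemma InCone.prod {ι : Type*} (s : Finset ι) (g : ι → (Fin N → EuclideanSpace ℝ (Fin n)) → ℝ)
    (hg : ∀ i ∈ s, InCone n N (g i)) : InCone n N (fun x => ∏ i ∈ s, g i x) := by
  classical
  induction s using Finset.induction_on with
  | empty => exact InCone.one.congr fun x => by simp
  | insert a s hx ih =>
    have h1 := hg a (Finset.mem_insert_self a s)
    have h2 := ih fun i hi => hg i (Finset.mem_insert_of_mem hi)
    exact (h1.mul h2).congr fun x => by rw [Finset.prod_insert hx]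

lemma prod_pow_single (i : Fin N) (α : Fin n) (x : Fin N → EuclideanSpace ℝ (Fin n)) :
    (∏ a, ∏ β, (x a β) ^ (if a = i ∧ β = α then 1 else 0)) = x i α := by
  rw [Finset.prod_eq_single i (fun b _ hb => Finset.prod_eq_one fun β _ => by simp [hb])
    (by simp)]
  rw [Finset.prod_eq_single α (fun b _ hb => by simp [hb]) (by simp)]
  simp

lemma InCone.coord_mul (i j : Fin N) (α : Fin n) :
    InCone n N (fun x => x i α * x j α) := by
  have hgen := InCone.gen (n := n) (N := N) 1
    (fun a β => (if a = i ∧ β = α then 1 else 0) + (if a = j ∧ β = α then 1 else 0)) zero_le_one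
  refine hgen.congr fun x => ?_
  rw [one_mul, mono]
  simp_rw [pow_add, Finset.prod_mul_distrib]
  rw [prod_pow_single i α x, prod_pow_single j α x]

lemma InCone.inner_fn (i j : Fin N) :
    InCone n N (fun x => (⟪x i, x j⟫ : ℝ)) := by
  have h := InCone.sum (n := n) (N := N) Finset.univ
    (fun α x => x i α * x j α) (fun α _ => InCone.coord_mul i j α)
  refine h.congr fun x => ?_
  simp [PiLp.inner_apply, RCLike.inner_apply, conj_trivial]
  exact Finset.sum_congr rfl fun _ _ => mul_comm _ _

/-! ### Pointwise bound at the componentwise absolute value -/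

lemma InCone.abs_le {g : (Fin N → EuclideanSpace ℝ (Fin n)) → ℝ} (hg : InCone n N g) (x) :
    |g x| ≤ g (absx x) := by
  induction hg with
  | gen r m hr =>
    have : |r * mono m x| = r * mono m (absx x) := by
      rw [abs_mul, abs_of_nonneg hr, mono, mono, Finset.abs_prod]
      congr 1
      refine Finset.prod_congr rfl fun i _ => ?_
      rw [Finset.abs_prod]
      exact Finset.prod_congr rfl fun α _ => by rw [abs_pow]; rfl
    exact this.le
  | add hg1 hg2 ih1 ih2 =>
    exact (abs_add_le _ _).trans (add_le_add ih1 ih2)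

lemma absx_idem (x : Fin N → EuclideanSpace ℝ (Fin n)) : absx (absx x) = absx x := by
  funext i
  ext α
  show |(absx x) i α| = (absx x) i α
  exact abs_of_nonneg (abs_nonneg _)

lemma InCone.nonneg_abs {g : (Fin N → EuclideanSpace ℝ (Fin n)) → ℝ} (hg : InCone n N g) (x) :
    0 ≤ g (absx x) := by
  have h := hg.abs_le (absx x)
  rw [absx_idem] at h
  exact (abs_nonneg _).trans h

/-! ### Diagonal Gaussian weight -/

noncomputable def dDiag (a : Fin N → ℝ) (x : Fin N → EuclideanSpace ℝ (Fin n)) : ℝ :=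
  ∏ i, Real.exp (-(a i * ∑ α, (x i α) ^ 2) / 2)

lemma dDiag_pos (a : Fin N → ℝ) (x) : 0 < dDiag (n := n) a x :=
  Finset.prod_pos fun i _ => Real.exp_pos _

lemma master {a : Fin N → ℝ} (ha : ∀ i, 0 < a i)
    {g : (Fin N → EuclideanSpace ℝ (Fin n)) → ℝ} (hg : InCone n N g) :
    Integrable (fun x => g x * dDiag a x) ∧
    Integrable (fun x => g (absx x) * dDiag a x) ∧
    0 ≤ ∫ x, g x * dDiag a x := by
  induction hg with
  | gen r m hr =>
    have hfun : (fun x : Fin N → EuclideanSpace ℝ (Fin n) => (r * mono m x) * dDiag a x)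
        = fun x => r * ∏ i, ((∏ α, (x i α) ^ (m i α)) *
            Real.exp (-(a i * ∑ α, (x i α) ^ 2) / 2)) := by
      funext x
      rw [mono, dDiag, Finset.prod_mul_distrib]
      ring
    have hfunabs : (fun x : Fin N → EuclideanSpace ℝ (Fin n) =>
          (r * mono m (absx x)) * dDiag a x)
        = fun x => r * ∏ i, ((∏ α, |x i α| ^ (m i α)) *
            Real.exp (-(a i * ∑ α, (x i α) ^ 2) / 2)) := by
      funext x
      have hc : ∀ i α, absx x i α = |x i α| := fun _ _ => rfl
      rw [mono, dDiag, Finset.prod_mul_distrib]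
      simp_rw [hc]
      ring
    refine ⟨?_, ?_, ?_⟩
    · rw [hfun]
      exact (Integrable.fintype_prod (f := fun i (v : EuclideanSpace ℝ (Fin n)) =>
        (∏ α, (v α) ^ (m i α)) * Real.exp (-(a i * ∑ α, (v α) ^ 2) / 2))
        fun i => (euclid_key (ha i) (m i)).1).const_mul r
    · rw [hfunabs]
      exact (Integrable.fintype_prod (f := fun i (v : EuclideanSpace ℝ (Fin n)) =>
        (∏ α, |v α| ^ (m i α)) * Real.exp (-(a i * ∑ α, (v α) ^ 2) / 2))
        fun i => (euclid_key (ha i) (m i)).2.1).const_mul r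
    · rw [hfun, MeasureTheory.integral_const_mul, MeasureTheory.volume_pi,
        MeasureTheory.integral_fintype_prod_eq_prod
        (f := fun i (v : EuclideanSpace ℝ (Fin n)) =>
          (∏ α, (v α) ^ (m i α)) * Real.exp (-(a i * ∑ α, (v α) ^ 2) / 2))]
      exact mul_nonneg hr (Finset.prod_nonneg fun i _ => (euclid_key (ha i) (m i)).2.2)
  | @add g1 g2 hg1 hg2 ih1 ih2 =>
    obtain ⟨i1, i1a, p1⟩ := ih1
    obtain ⟨i2, i2a, p2⟩ := ih2
    have e1 : (fun x : Fin N → EuclideanSpace ℝ (Fin n) => (g1 x + g2 x) * dDiag a x)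
        = fun x => g1 x * dDiag a x + g2 x * dDiag a x := funext fun x => by ring
    have e2 : (fun x : Fin N → EuclideanSpace ℝ (Fin n) => (g1 (absx x) + g2 (absx x)) * dDiag a x)
        = fun x => g1 (absx x) * dDiag a x + g2 (absx x) * dDiag a x := funext fun x => by ring
    refine ⟨?_, ?_, ?_⟩
    · rw [e1]; exact i1.add i2
    · rw [e2]; exact i1a.add i2a
    · rw [e1, integral_add i1 i2]; exact add_nonneg p1 p2



lemma quad_pos {F : Matrix (Fin N) (Fin N) ℝ} (hpos : F.PosDef)
    (v : EuclideanSpace ℝ (Fin N)) (hv : v ≠ 0) :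
    0 < ∑ i, ∑ j, F i j * (v i * v j) := by
  have h := hpos.dotProduct_mulVec_pos (x := WithLp.ofLp v)
    (fun h0 => hv (by ext i; simpa using congrFun h0 i))
  have heq : dotProduct (star (R := Fin N → ℝ) (WithLp.ofLp v)) (Matrix.mulVec F (WithLp.ofLp v))
      = ∑ i, ∑ j, F i j * (v i * v j) := by
    simp only [dotProduct, Matrix.mulVec, Pi.star_apply, star_trivial,
      Finset.mul_sum]
    exact Finset.sum_congr rfl fun i _ => Finset.sum_congr rfl fun j _ => by ring
  rwa [heq] at h

lemma quad_smul (F : Matrix (Fin N) (Fin N) ℝ) (t : ℝ) (v : EuclideanSpace ℝ (Fin N)) :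
    ∑ i, ∑ j, F i j * ((t • v) i * (t • v) j) = t ^ 2 * ∑ i, ∑ j, F i j * (v i * v j) := by
  simp only [Finset.mul_sum]
  refine Finset.sum_congr rfl fun i _ => Finset.sum_congr rfl fun j _ => ?_
  have h1 : (t • v) i = t * v i := rfl
  have h2 : (t • v) j = t * v j := rfl
  rw [h1, h2]; ring

lemma exists_eps {F : Matrix (Fin N) (Fin N) ℝ} (hpos : F.PosDef) (hN : 1 ≤ N) :
    ∃ ε : ℝ, 0 < ε ∧ ∀ v : EuclideanSpace ℝ (Fin N),
      ε * ∑ i, (v i) ^ 2 ≤ ∑ i, ∑ j, F i j * (v i * v j) := by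
  have hc : Continuous fun v : EuclideanSpace ℝ (Fin N) => ∑ i, ∑ j, F i j * (v i * v j) := by
    fun_prop
  have hv0 : (EuclideanSpace.single (⟨0, hN⟩ : Fin N) (1:ℝ)) ∈
      Metric.sphere (0 : EuclideanSpace ℝ (Fin N)) 1 := by
    simp [EuclideanSpace.norm_single]
  obtain ⟨w, hwS, hwmin⟩ := (isCompact_sphere (0 : EuclideanSpace ℝ (Fin N)) 1).exists_isMinOn
    ⟨_, hv0⟩ hc.continuousOn
  have hw1 : ‖w‖ = 1 := by simpa using hwS
  have hwne : w ≠ 0 := fun h => by simp [h] at hw1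
  refine ⟨_, quad_pos hpos w hwne, fun v => ?_⟩
  rcases eq_or_ne v 0 with rfl | hv
  · simp
  · have hnv : 0 < ‖v‖ := norm_pos_iff.2 hv
    have hmem : ‖v‖⁻¹ • v ∈ Metric.sphere (0 : EuclideanSpace ℝ (Fin N)) 1 := by
      simp [norm_smul, abs_of_pos (inv_pos.2 hnv), inv_mul_cancel₀ hnv.ne']
    have hmin := hwmin hmem
    have hscale := quad_smul F (‖v‖⁻¹) v
    have hsum : ∑ i, (v i) ^ 2 = ‖v‖ ^ 2 := by
      rw [EuclideanSpace.norm_eq, Real.sq_sqrt (Finset.sum_nonneg fun i _ => sq_nonneg _)]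
      exact Finset.sum_congr rfl fun i _ => by rw [Real.norm_eq_abs, sq_abs]
    set Q := ∑ i, ∑ j, F i j * (v i * v j) with hQ
    have : (∑ i, ∑ j, F i j * (w i * w j)) ≤ ‖v‖⁻¹ ^ 2 * Q := by
      rw [← hscale]; exact hmin
    rw [hsum]
    have h2 : (∑ i, ∑ j, F i j * (w i * w j)) * ‖v‖ ^ 2 ≤ ‖v‖⁻¹ ^ 2 * Q * ‖v‖ ^ 2 := by
      gcongr
    calc (∑ i, ∑ j, F i j * (w i * w j)) * ‖v‖ ^ 2 ≤ ‖v‖⁻¹ ^ 2 * Q * ‖v‖ ^ 2 := h2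
    _ = Q := by field_simp
  
lemma diag_pos {F : Matrix (Fin N) (Fin N) ℝ} (hpos : F.PosDef) (i : Fin N) : 0 < F i i := by
  have h := quad_pos hpos (EuclideanSpace.single i (1:ℝ)) (by
    intro h
    have := congrArg (fun w : EuclideanSpace ℝ (Fin N) => w i) h
    simp [EuclideanSpace.single_apply] at this)
  have heq : ∑ a, ∑ b, F a b * ((EuclideanSpace.single i (1:ℝ)) a *
      (EuclideanSpace.single i (1:ℝ)) b) = F i i := by
    simp [EuclideanSpace.single_apply, Finset.mul_sum, mul_ite, ite_mul,
      Finset.sum_ite_eq', Finset.sum_ite_eq]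
  rwa [heq] at h


lemma inner_self_eq_sum_sq (v : EuclideanSpace ℝ (Fin n)) :
    (⟪v, v⟫ : ℝ) = ∑ α, (v α) ^ 2 := by
  simp only [PiLp.inner_apply, RCLike.inner_apply, conj_trivial, pow_two]

lemma inner_abs (x : Fin N → EuclideanSpace ℝ (Fin n)) (i j : Fin N) :
    (⟪absx x i, absx x j⟫ : ℝ) = ∑ α, |x i α| * |x j α| := by
  simp [PiLp.inner_apply, RCLike.inner_apply, conj_trivial]
  exact Finset.sum_congr rfl fun _ _ => mul_comm _ _

/-- The off-diagonal interaction. -/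
noncomputable def TT (F : Matrix (Fin N) (Fin N) ℝ) (x : Fin N → EuclideanSpace ℝ (Fin n)) : ℝ :=
  ∑ i, ∑ j, (if i = j then 0 else -(F i j) / 2) * (⟪x i, x j⟫ : ℝ)

lemma TT_inCone {F : Matrix (Fin N) (Fin N) ℝ} (hferro : ∀ i j, i ≠ j → F i j ≤ 0) :
    InCone n N (TT (n := n) F) := by
  refine (InCone.sum Finset.univ _ fun i _ => InCone.sum Finset.univ
    (fun j x => (if i = j then 0 else -(F i j) / 2) * (⟪x i, x j⟫ : ℝ)) fun j _ => ?_).congr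
    fun x => rfl
  refine InCone.smul ?_ (InCone.inner_fn i j)
  by_cases h : i = j
  · simp [h]
  · simp only [h, if_false]
    have := hferro i j h
    linarith

lemma gauss_split (F : Matrix (Fin N) (Fin N) ℝ) (x : Fin N → EuclideanSpace ℝ (Fin n)) :
    gaussDensity n N F x = dDiag (fun i => F i i) x * Real.exp (TT F x) := by
  rw [gaussDensity, dDiag, ← Real.exp_sum, ← Real.exp_add]
  congr 1
  have key : ∀ i j : Fin N, -(F i j * (⟪x i, x j⟫ : ℝ)) / 2
      = (if i = j then -(F i i * ∑ α, (x i α) ^ 2) / 2 else 0)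
        + (if i = j then 0 else -(F i j) / 2) * (⟪x i, x j⟫ : ℝ) := by
    intro i j
    by_cases h : i = j
    · subst h
      rw [if_pos rfl, if_pos rfl, inner_self_eq_sum_sq]
      ring
    · rw [if_neg h, if_neg h]
      ring
  calc -(∑ i, ∑ j, F i j * (⟪x i, x j⟫ : ℝ)) / 2
      = ∑ i, ∑ j, (-(F i j * (⟪x i, x j⟫ : ℝ)) / 2) := by
        rw [← Finset.sum_neg_distrib, Finset.sum_div]
        refine Finset.sum_congr rfl fun i _ => ?_
        rw [← Finset.sum_neg_distrib, Finset.sum_div]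
    _ = ∑ i, ∑ j, ((if i = j then -(F i i * ∑ α, (x i α) ^ 2) / 2 else 0)
        + (if i = j then 0 else -(F i j) / 2) * (⟪x i, x j⟫ : ℝ)) :=
        Finset.sum_congr rfl fun i _ => Finset.sum_congr rfl fun j _ => key i j
    _ = (∑ i, ∑ j, (if i = j then -(F i i * ∑ α, (x i α) ^ 2) / 2 else 0))
        + ∑ i, ∑ j, (if i = j then 0 else -(F i j) / 2) * (⟪x i, x j⟫ : ℝ) := by
        simp only [Finset.sum_add_distrib]
    _ = (∑ i, -(F i i * ∑ α, (x i α) ^ 2) / 2) + TT F x := by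
        rw [TT]
        congr 1
        exact Finset.sum_congr rfl fun i _ => by simp [Finset.sum_ite_eq]

lemma dDiag_absx (a : Fin N → ℝ) (x : Fin N → EuclideanSpace ℝ (Fin n)) :
    dDiag a (absx x) = dDiag a x := by
  rw [dDiag, dDiag]
  refine Finset.prod_congr rfl fun i _ => ?_
  have h : ∑ α, ((absx x) i α) ^ 2 = ∑ α, (x i α) ^ 2 :=
    Finset.sum_congr rfl fun α _ => by
      show |x i α| ^ 2 = (x i α) ^ 2
      rw [sq_abs]
  rw [h]

lemma gauss_abs_le {F : Matrix (Fin N) (Fin N) ℝ} {ε : ℝ}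
    (hεle : ∀ v : EuclideanSpace ℝ (Fin N),
      ε * ∑ i, (v i) ^ 2 ≤ ∑ i, ∑ j, F i j * (v i * v j))
    (x : Fin N → EuclideanSpace ℝ (Fin n)) :
    gaussDensity n N F (absx x) ≤ dDiag (fun _ : Fin N => ε) x := by
  rw [gaussDensity, dDiag, ← Real.exp_sum]
  apply Real.exp_le_exp.2
  have hq : ε * ∑ i, ∑ α, (x i α) ^ 2 ≤ ∑ i, ∑ j, F i j * (⟪absx x i, absx x j⟫ : ℝ) := by
    have h1 : ∑ i, ∑ j, F i j * (⟪absx x i, absx x j⟫ : ℝ)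
        = ∑ α, ∑ i, ∑ j, F i j * (|x i α| * |x j α|) := by
      simp_rw [inner_abs, Finset.mul_sum]
      calc ∑ i, ∑ j, ∑ α, F i j * (|x i α| * |x j α|)
          = ∑ i, ∑ α, ∑ j, F i j * (|x i α| * |x j α|) :=
            Finset.sum_congr rfl fun i _ => Finset.sum_comm
        _ = ∑ α, ∑ i, ∑ j, F i j * (|x i α| * |x j α|) := Finset.sum_comm
    rw [h1]
    have h2 : ∀ α : Fin n, ε * ∑ i, (x i α) ^ 2
        ≤ ∑ i, ∑ j, F i j * (|x i α| * |x j α|) := by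
      intro α
      have := hεle ((WithLp.equiv 2 (Fin N → ℝ)).symm (fun i => |x i α|))
      have hcoord : ∀ i, ((WithLp.equiv 2 (Fin N → ℝ)).symm (fun i => |x i α|)) i
          = |x i α| := fun _ => rfl
      simp_rw [hcoord, sq_abs] at this
      exact this
    calc ε * ∑ i, ∑ α, (x i α) ^ 2 = ∑ α, ε * ∑ i, (x i α) ^ 2 := by
          rw [Finset.sum_comm (γ := Fin N) (s := Finset.univ) (t := Finset.univ), Finset.mul_sum]
      _ ≤ ∑ α, ∑ i, ∑ j, F i j * (|x i α| * |x j α|) :=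
          Finset.sum_le_sum fun α _ => h2 α
  have hL : ∑ i : Fin N, -(ε * ∑ α, (x i α) ^ 2) / 2 = -(ε * ∑ i, ∑ α, (x i α) ^ 2) / 2 := by
    rw [Finset.mul_sum, ← Finset.sum_neg_distrib, Finset.sum_div]
  rw [hL]
  have : ∑ i, ∑ j, F i j * (⟪absx x i, absx x j⟫ : ℝ)
      = ∑ i, ∑ j, F i j * (⟪(absx x) i, (absx x) j⟫ : ℝ) := rfl
  linarith [hq]

end GriffithsAux

set_option maxHeartbeats 2000000 in
open GriffithsAux in
/-- First Griffiths inequality for Gaussian ferromagnetic spins: `E f ≥ 0` for `f ∈ 𝓔_G`,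
where `E f = Z⁻¹ ∫ f(x) exp(-∑ f_{ij} x_i·x_j/2) dx₁⋯dx_N`. -/
theorem first_griffiths_gaussian (n N : ℕ) (hn : 1 ≤ n) (hN : 1 ≤ N)
    (F : Matrix (Fin N) (Fin N) ℝ) (hsym : F.IsSymm) (hpos : F.PosDef)
    (hferro : ∀ i j, i ≠ j → F i j ≤ 0)
    (f : (Fin N → EuclideanSpace ℝ (Fin n)) → ℝ) (hf : InConeG n N f) :
    0 ≤ (∫ x, f x * gaussDensity n N F x) / (∫ x, gaussDensity n N F x) := by

  have hden : 0 ≤ ∫ x, gaussDensity n N F x :=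
    integral_nonneg fun x => (Real.exp_pos _).le
  refine div_nonneg ?_ hden
  -- f is in the coordinate cone
  have hfc : InCone n N f := by
    obtain ⟨K, c, e, hc, hrep⟩ := hf
    have h : InCone n N (fun x => ∑ k, c k *
        ∏ p ∈ Finset.univ.filter (fun p : Fin N × Fin N => p.1 ≤ p.2),
          (⟪x p.1, x p.2⟫ : ℝ) ^ e k p.1 p.2) := by
      refine InCone.sum Finset.univ _ fun k _ => InCone.smul (hc k) ?_
      exact InCone.prod (Finset.univ.filter (fun p : Fin N × Fin N => p.1 ≤ p.2))
        (fun (p : Fin N × Fin N) x => (⟪x p.1, x p.2⟫ : ℝ) ^ e k p.1 p.2)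
        fun p _ => (InCone.inner_fn p.1 p.2).pow _
    exact h.congr fun x => (hrep x).symm
  set a : Fin N → ℝ := fun i => F i i with ha_def
  have ha : ∀ i, 0 < a i := fun i => diag_pos hpos i
  obtain ⟨ε, hε, hεle⟩ := exists_eps hpos hN
  have haε : ∀ i : Fin N, 0 < (fun _ : Fin N => ε) i := fun _ => hε
  have hTc : InCone n N (TT (n := n) F) := TT_inCone hferro
  -- the cone functions w_m and their properties
  have hw : ∀ m : ℕ, InCone n N (fun x => ((m ! : ℝ))⁻¹ * (f x * TT F x ^ m)) := fun m =>
    InCone.smul (by positivity) (hfc.mul (hTc.pow m))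
  have hmaster := fun m : ℕ => master ha (hw m)
  set u : ℕ → (Fin N → EuclideanSpace ℝ (Fin n)) → ℝ :=
    fun m x => (((m ! : ℝ))⁻¹ * (f x * TT F x ^ m)) * dDiag a x with hu_def
  -- pointwise expansion
  have hpt : ∀ x, f x * gaussDensity n N F x = ∑' m : ℕ, u m x := by
    intro x
    rw [gauss_split F x]
    have hexp : Real.exp (TT F x) = ∑' m : ℕ, TT F x ^ m / (m ! : ℝ) := by
      rw [Real.exp_eq_exp_ℝ, NormedSpace.exp_eq_tsum_div]
    rw [hexp]
    calc f x * (dDiag a x * ∑' m : ℕ, TT F x ^ m / (m ! : ℝ))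
        = (f x * dDiag a x) * ∑' m : ℕ, TT F x ^ m / (m ! : ℝ) := by ring
      _ = ∑' m : ℕ, (f x * dDiag a x) * (TT F x ^ m / (m ! : ℝ)) := (tsum_mul_left).symm
      _ = ∑' m : ℕ, u m x := by
          refine tsum_congr fun m => ?_
          rw [hu_def]
          field_simp
  -- the dominating bound
  have habs_le : ∀ m : ℕ, ∀ x, |u m x| ≤
      (((m ! : ℝ))⁻¹ * (f (absx x) * TT F (absx x) ^ m)) * dDiag a x := by
    intro m x
    have h1 := (hw m).abs_le x
    have h2 : |u m x| = |((m ! : ℝ))⁻¹ * (f x * TT F x ^ m)| * dDiag a x := by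
      rw [hu_def, abs_mul, abs_of_pos (dDiag_pos a x)]
    rw [h2]
    exact mul_le_mul_of_nonneg_right h1 (dDiag_pos a x).le
  -- summability of lintegrals
  have hbound : ∑' m : ℕ, ∫⁻ x, ‖u m x‖₊ ≠ ⊤ := by
    have step1 : ∀ m : ℕ, ∫⁻ x, (‖u m x‖₊ : ENNReal) ≤
        ∫⁻ x, ENNReal.ofReal ((((m ! : ℝ))⁻¹ * (f (absx x) * TT F (absx x) ^ m)) * dDiag a x) := by
      intro m
      refine lintegral_mono fun x => ?_
      rw [← enorm_eq_nnnorm, Real.enorm_eq_ofReal_abs]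
      exact ENNReal.ofReal_le_ofReal (habs_le m x)
    have meas : ∀ m : ℕ, AEMeasurable (fun x => ENNReal.ofReal
        ((((m ! : ℝ))⁻¹ * (f (absx x) * TT F (absx x) ^ m)) * dDiag a x)) := by
      intro m
      exact ((hmaster m).2.1.aestronglyMeasurable.aemeasurable).ennreal_ofReal
    have step2 : ∑' m : ℕ, ∫⁻ x, ENNReal.ofReal
        ((((m ! : ℝ))⁻¹ * (f (absx x) * TT F (absx x) ^ m)) * dDiag a x)
        = ∫⁻ x, ∑' m : ℕ, ENNReal.ofReal
          ((((m ! : ℝ))⁻¹ * (f (absx x) * TT F (absx x) ^ m)) * dDiag a x) :=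
      (lintegral_tsum meas).symm
    have hptabs : ∀ x, ∑' m : ℕ, ENNReal.ofReal
        ((((m ! : ℝ))⁻¹ * (f (absx x) * TT F (absx x) ^ m)) * dDiag a x)
        = ENNReal.ofReal (f (absx x) * gaussDensity n N F (absx x)) := by
      intro x
      have hnn : ∀ m : ℕ, 0 ≤ (((m ! : ℝ))⁻¹ * (f (absx x) * TT F (absx x) ^ m)) * dDiag a x :=
        fun m => mul_nonneg ((hw m).nonneg_abs x) (dDiag_pos a x).le
      have hsummable : Summable (fun m : ℕ =>
          (((m ! : ℝ))⁻¹ * (f (absx x) * TT F (absx x) ^ m)) * dDiag a x) := by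
        have h0 := (Real.summable_pow_div_factorial (TT F (absx x))).mul_left
          (f (absx x) * dDiag a x)
        refine h0.congr fun m => ?_
        field_simp
      rw [← ENNReal.ofReal_tsum_of_nonneg hnn hsummable]
      congr 1
      have : ∑' m : ℕ, (((m ! : ℝ))⁻¹ * (f (absx x) * TT F (absx x) ^ m)) * dDiag a x
          = (f (absx x) * dDiag a x) * ∑' m : ℕ, TT F (absx x) ^ m / (m ! : ℝ) := by
        rw [← tsum_mul_left]
        refine tsum_congr fun m => ?_
        field_simp
      have hexp2 : Real.exp (TT F (absx x)) = ∑' m : ℕ, TT F (absx x) ^ m / (m ! : ℝ) := by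
        rw [Real.exp_eq_exp_ℝ, NormedSpace.exp_eq_tsum_div]
      rw [this, ← hexp2]
      rw [gauss_split F (absx x), dDiag_absx]
      ring
    have hdom : ∀ x, ENNReal.ofReal (f (absx x) * gaussDensity n N F (absx x))
        ≤ ENNReal.ofReal (f (absx x) * dDiag (fun _ : Fin N => ε) x) := by
      intro x
      refine ENNReal.ofReal_le_ofReal ?_
      exact mul_le_mul_of_nonneg_left (gauss_abs_le hεle x) (hfc.nonneg_abs x)
    have hfin : ∫⁻ x, ENNReal.ofReal (f (absx x) * dDiag (fun _ : Fin N => ε) x) < ⊤ := by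
      have hint := (master haε hfc).2.1
      refine lt_of_le_of_lt ?_ hint.hasFiniteIntegral
      refine lintegral_mono fun x => ?_
      rw [Real.enorm_eq_ofReal_abs]
      exact ENNReal.ofReal_le_ofReal (le_abs_self _)
    have : ∑' m : ℕ, ∫⁻ x, (‖u m x‖₊ : ENNReal)
        ≤ ∫⁻ x, ENNReal.ofReal (f (absx x) * dDiag (fun _ : Fin N => ε) x) := by
      calc ∑' m : ℕ, ∫⁻ x, (‖u m x‖₊ : ENNReal)
          ≤ ∑' m : ℕ, ∫⁻ x, ENNReal.ofReal
            ((((m ! : ℝ))⁻¹ * (f (absx x) * TT F (absx x) ^ m)) * dDiag a x) :=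
            ENNReal.tsum_le_tsum step1
        _ = ∫⁻ x, ∑' m : ℕ, ENNReal.ofReal
            ((((m ! : ℝ))⁻¹ * (f (absx x) * TT F (absx x) ^ m)) * dDiag a x) := step2
        _ = ∫⁻ x, ENNReal.ofReal (f (absx x) * gaussDensity n N F (absx x)) := by
            exact lintegral_congr fun x => hptabs x
        _ ≤ ∫⁻ x, ENNReal.ofReal (f (absx x) * dDiag (fun _ : Fin N => ε) x) :=
            lintegral_mono hdom
    exact (lt_of_le_of_lt this hfin).ne
  -- interchange
  have hnum : ∫ x, f x * gaussDensity n N F x = ∑' m : ℕ, ∫ x, u m x := by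
    have hfx : (fun x => f x * gaussDensity n N F x) = fun x => ∑' m : ℕ, u m x :=
      funext hpt
    rw [hfx]
    exact integral_tsum (fun m => (hmaster m).1.aestronglyMeasurable) hbound
  rw [hnum]
  exact tsum_nonneg fun m => (hmaster m).2.2
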